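/- If an almost Toeplitz matrix T = T₀ + Σ_{k=−m}^{n} α_k c^{(k)} (T₀ finitary, α_{−m}, α_n ≠ 0, m,n ≥ 0) lies in E₀, is invertible, and T⁻¹ is also almost Toeplitz, then m = n = 0; that is, T = α·Id + T₀ with 0 ≠ α ∈ F and T₀ finitary. -/

import Mathlib

noncomputable section

/-- The algebra `E` of column-finite `ℕ × ℕ` matrices over `F`, realized as the
algebra of all `F`-linear endomorphisms of the free module `⊕_{i ∈ ℕ} F eᵢ`. -/
abbrev EMat (F : Type*) [Field F] := Module.End F (ℕ →₀ F)

/-- The `(i,j)` entry of (the matrix of) an endomorphism `f`. -/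
def entry {F : Type*} [Field F] (f : EMat F) (i j : ℕ) : F :=
  f (Finsupp.single j 1) i

/-- `f` has finitely many nonzero entries in each row. Together with the
automatic column-finiteness this says `f` lies in `E₀`. -/
def RowFinite {F : Type*} [Field F] (f : EMat F) : Prop :=
  ∀ i : ℕ, {j : ℕ | entry f i j ≠ 0}.Finite

/-- `M_∞(F)`: the nonunital algebra of finitary matrices (finitely many
nonzero entries overall), i.e. endomorphisms killing all but finitely many
basis vectors. -/
def Mfin (F : Type*) [Field F] : NonUnitalSubalgebra F (EMat F) where
  carrier := {f | {j : ℕ | f (Finsupp.single j 1) ≠ 0}.Finite}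
  zero_mem' := by
    simp
  add_mem' := by
    intro a b ha hb
    refine ((ha.union hb).subset ?_)
    intro j hj
    simp only [Set.mem_setOf_eq, LinearMap.add_apply] at hj ⊢
    by_contra h
    try push_neg at h
    simp only [Set.mem_union, Set.mem_setOf_eq, not_or, not_not, ne_eq] at h
    rw [h.1, h.2, add_zero] at hj
    exact hj rfl
  mul_mem' := by
    intro a b ha hb
    refine hb.subset ?_
    intro j hj
    simp only [Set.mem_setOf_eq] at hj ⊢
    intro h
    apply hj
    show a (b (Finsupp.single j 1)) = 0
    rw [h]
    simp
  smul_mem' := by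
    intro c a ha
    refine ha.subset ?_
    intro j hj
    simp only [Set.mem_setOf_eq, LinearMap.smul_apply] at hj ⊢
    intro h
    rw [h] at hj
    simp at hj

instance (F : Type*) [Field F] : NonUnitalRing (Mfin F) :=
  NonUnitalSubalgebra.toNonUnitalRing (R := F) (A := EMat F) (Mfin F)

/-- The shift `c = Σ_{i} e_{i+1,i}` (sends basis vector `eᵢ` to `e_{i+1}`). -/
def cSh (F : Type*) [Field F] : EMat F :=
  Finsupp.lsum F fun i => Finsupp.lsingle (i + 1)

/-- The shift `c* = Σ_{i} e_{i,i+1}` (sends `e_{i+1}` to `eᵢ` and `e₀` to `0`). -/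
def cShStar (F : Type*) [Field F] : EMat F :=
  Finsupp.lsum F fun i => if i = 0 then 0 else Finsupp.lsingle (i - 1)



/-- The diagonal matrix `c^{(k)} = Σ_{j−i=k} e_{ij}` (sends `e_j` to `e_{j−k}`
when `j ≥ k`, and to `0` otherwise). -/
def diagMat (F : Type*) [Field F] (k : ℤ) : EMat F :=
  Finsupp.lsum F fun j => if k ≤ (j : ℤ) then Finsupp.lsingle (((j : ℤ) - k).toNat) else 0

lemma aT_diagMat_single {F : Type*} [Field F] (k : ℤ) (j : ℕ) :
    diagMat F k (Finsupp.single j 1) =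
      if k ≤ (j:ℤ) then Finsupp.single ((j:ℤ)-k).toNat (1:F) else 0 := by
  unfold diagMat
  rw [Finsupp.lsum_single]
  split <;> simp [Finsupp.lsingle_apply]

lemma aT_key (F : Type*) [Field F]
    (T S T₀ S₀ : EMat F) (m n p q : ℕ) (α β : ℤ → F)
    (hT : T = T₀ + ∑ k ∈ Finset.Icc (-(m : ℤ)) (n : ℤ), α k • diagMat F k)
    (hS : S = S₀ + ∑ k ∈ Finset.Icc (-(p : ℤ)) (q : ℤ), β k • diagMat F k)
    (N : ℕ)
    (hzT : ∀ j : ℕ, N < j → T₀ (Finsupp.single j 1) = 0)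
    (hzS : ∀ j : ℕ, N < j → S₀ (Finsupp.single j 1) = 0)
    (hTS : T * S = 1) :
    ∀ i : ℕ, (if N+1+q+n = i then (1:F) else 0) =
      ∑ l ∈ Finset.Icc (-(p:ℤ)) (q:ℤ), ∑ k ∈ Finset.Icc (-(m:ℤ)) (n:ℤ),
        β l * α k * (if (((N:ℤ)+1+q+n) - l - k).toNat = i then (1:F) else 0) := by
  intro i
  set J : ℕ := N+1+q+n with hJdef
  have hJ : (J:ℤ) = (N:ℤ)+1+q+n := by push_cast [hJdef]; ring
  have hSJ : S (Finsupp.single J 1) =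
      ∑ l ∈ Finset.Icc (-(p:ℤ)) (q:ℤ), β l • Finsupp.single ((J:ℤ) - l).toNat (1:F) := by
    rw [hS]
    simp only [LinearMap.add_apply, LinearMap.sum_apply, LinearMap.smul_apply]
    rw [hzS J (by omega), zero_add]
    refine Finset.sum_congr rfl fun l hl => ?_
    rw [Finset.mem_Icc] at hl
    rw [aT_diagMat_single, if_pos (by omega)]
  have hTJ : T (S (Finsupp.single J 1)) =
      ∑ l ∈ Finset.Icc (-(p:ℤ)) (q:ℤ), ∑ k ∈ Finset.Icc (-(m:ℤ)) (n:ℤ),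
        (β l * α k) • Finsupp.single ((J:ℤ) - l - k).toNat (1:F) := by
    rw [hSJ, map_sum]
    refine Finset.sum_congr rfl fun l hl => ?_
    rw [Finset.mem_Icc] at hl
    rw [map_smul, hT]
    simp only [LinearMap.add_apply, LinearMap.sum_apply, LinearMap.smul_apply]
    have htn : (((J:ℤ) - l).toNat : ℤ) = (J:ℤ) - l := Int.toNat_of_nonneg (by omega)
    rw [hzT ((J:ℤ) - l).toNat (by omega), zero_add, Finset.smul_sum]
    refine Finset.sum_congr rfl fun k hk => ?_
    rw [Finset.mem_Icc] at hk
    rw [aT_diagMat_single, if_pos (by omega), smul_smul]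
    congr 2
    omega
  have h1 : T (S (Finsupp.single J 1)) = Finsupp.single J 1 := by
    have := congrArg (fun f : EMat F => f (Finsupp.single J 1)) hTS
    simpa [Module.End.mul_apply] using this
  have h2 := congrArg (fun v : ℕ →₀ F => v i) (h1.symm.trans hTJ)
  simp only [Finsupp.finset_sum_apply, Finsupp.smul_apply, Finsupp.single_apply,
    smul_eq_mul, mul_ite, mul_one, mul_zero] at h2
  rw [← hJ]
  convert h2 using 2 with l hl
  refine Finset.sum_congr rfl fun k hk => ?_
  rw [mul_ite, mul_one, mul_zero]

/-- If an almost Toeplitz matrix `T = T₀ + Σ_{k=−m}^n α_k c^{(k)}` (with `T₀`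
finitary, `α_{−m}, α_n ≠ 0`) lies in `E₀`, is invertible, and its inverse is
also almost Toeplitz, then `m = n = 0`; that is, `T = α·Id + T₀` with
`α = α₀ ≠ 0`. -/
theorem almost_toeplitz_invertible (F : Type*) [Field F]
    (T S T₀ S₀ : EMat F) (m n p q : ℕ) (α β : ℤ → F)
    (hT : T = T₀ + ∑ k ∈ Finset.Icc (-(m : ℤ)) (n : ℤ), α k • diagMat F k)
    (hT₀ : T₀ ∈ Mfin F) (hαm : α (-(m : ℤ)) ≠ 0) (hαn : α (n : ℤ) ≠ 0)
    (hTrow : RowFinite T)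
    (hS : S = S₀ + ∑ k ∈ Finset.Icc (-(p : ℤ)) (q : ℤ), β k • diagMat F k)
    (hS₀ : S₀ ∈ Mfin F) (hβp : β (-(p : ℤ)) ≠ 0) (hβq : β (q : ℤ) ≠ 0)
    (hTS : T * S = 1) (hST : S * T = 1) :
    m = 0 ∧ n = 0 := by
  have hT₀f : {j : ℕ | T₀ (Finsupp.single j 1) ≠ 0}.Finite := hT₀
  have hS₀f : {j : ℕ | S₀ (Finsupp.single j 1) ≠ 0}.Finite := hS₀
  obtain ⟨N, hN⟩ := (hT₀f.union hS₀f).bddAbove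
  have hzT : ∀ j : ℕ, N < j → T₀ (Finsupp.single j 1) = 0 := by
    intro j hj
    by_contra h
    exact absurd (hN (Set.mem_union_left _ h)) (by omega)
  have hzS : ∀ j : ℕ, N < j → S₀ (Finsupp.single j 1) = 0 := by
    intro j hj
    by_contra h
    exact absurd (hN (Set.mem_union_right _ h)) (by omega)
  have hkey := aT_key F T S T₀ S₀ m n p q α β hT hS N hzT hzS hTS
  constructor
  · -- use i = N+1+q+n+m+p
    have h := hkey (N+1+q+n+m+p)
    rw [Finset.sum_eq_single (-(p:ℤ))] at h
    · rw [Finset.sum_eq_single (-(m:ℤ))] at h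
      · rw [if_pos (show (((N:ℤ)+1+q+n) - -(p:ℤ) - -(m:ℤ)).toNat = N+1+q+n+m+p by omega), mul_one] at h
        by_contra hm
        rw [if_neg (by omega)] at h
        exact mul_ne_zero hβp hαm h.symm
      · intro k hk hkne
        rw [Finset.mem_Icc] at hk
        rw [if_neg (by omega), mul_zero]
      · intro habs
        exact absurd (Finset.mem_Icc.mpr ⟨le_refl _, by omega⟩) habs
    · intro l hl hlne
      rw [Finset.mem_Icc] at hl
      refine Finset.sum_eq_zero fun k hk => ?_
      rw [Finset.mem_Icc] at hk
      rw [if_neg (by omega), mul_zero]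
    · intro habs
      exact absurd (Finset.mem_Icc.mpr ⟨le_refl _, by omega⟩) habs
  · -- use i = N+1
    have h := hkey (N+1)
    rw [Finset.sum_eq_single ((q:ℤ))] at h
    · rw [Finset.sum_eq_single ((n:ℤ))] at h
      · rw [if_pos (show (((N:ℤ)+1+q+n) - (q:ℤ) - (n:ℤ)).toNat = N+1 by omega), mul_one] at h
        by_contra hn
        rw [if_neg (by omega)] at h
        exact mul_ne_zero hβq hαn h.symm
      · intro k hk hkne
        rw [Finset.mem_Icc] at hk
        rw [if_neg (by omega), mul_zero]
      · intro habs
        exact absurd (Finset.mem_Icc.mpr ⟨by omega, le_refl _⟩) habs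
    · intro l hl hlne
      rw [Finset.mem_Icc] at hl
      refine Finset.sum_eq_zero fun k hk => ?_
      rw [Finset.mem_Icc] at hk
      rw [if_neg (by omega), mul_zero]
    · intro habs
      exact absurd (Finset.mem_Icc.mpr ⟨by omega, le_refl _⟩) habs


end
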